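/- arXiv:1510.07066 — 2 statements merged into one kernel-verified Lean document; each statement's English description precedes it below -/
import Mathlib

section
/- Every finite-dimensional filiform Lie algebra over an arbitrary field has a filiform basis. -/
section Aux

variable {K : Type*} [Field K] {L : Type*} [LieRing L] [LieAlgebra K L]

lemma lie_mem_lcs_add (j : ℕ) :
    ∀ (i : ℕ) (x y : L), x ∈ LieModule.lowerCentralSeries K L L i →
      y ∈ LieModule.lowerCentralSeries K L L j →
      ⁅x, y⁆ ∈ LieModule.lowerCentralSeries K L L (i + j + 1) := by
  induction j with
  | zero =>
    intro i x y hx _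
    rw [← lie_skew]
    refine neg_mem ?_
    rw [show i + 0 + 1 = i + 1 by omega, LieModule.lowerCentralSeries_succ]
    exact LieSubmodule.lie_mem_lie trivial hx
  | succ j ih =>
    intro i x y hx hy
    rw [LieModule.lowerCentralSeries_succ, ← LieSubmodule.mem_toSubmodule,
      LieSubmodule.lieIdeal_oper_eq_linear_span'] at hy
    induction hy using Submodule.span_induction with
    | mem m hm =>
      obtain ⟨a, -, b, hb, rfl⟩ := hm
      rw [leibniz_lie]
      refine add_mem ?_ ?_
      · have h1 : ⁅x, a⁆ ∈ LieModule.lowerCentralSeries K L L (i + 1) := by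
          rw [← lie_skew]
          refine neg_mem ?_
          rw [LieModule.lowerCentralSeries_succ]
          exact LieSubmodule.lie_mem_lie trivial hx
        have h2 := ih (i + 1) _ _ h1 hb
        rwa [show i + 1 + j + 1 = i + (j + 1) + 1 by omega] at h2
      · have h2 := ih i x b hx hb
        have h3 : ⁅a, ⁅x, b⁆⁆ ∈ LieModule.lowerCentralSeries K L L (i + j + 1 + 1) := by
          rw [LieModule.lowerCentralSeries_succ]
          exact LieSubmodule.lie_mem_lie trivial h2
        rwa [show i + j + 1 + 1 = i + (j + 1) + 1 by omega] at h3
    | zero => simp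
    | add u v _ _ hu hv => rw [lie_add]; exact add_mem hu hv
    | smul t u _ hu => rw [lie_smul]; exact SMulMemClass.smul_mem t hu

lemma mem_lcs_zero (x : L) : x ∈ LieModule.lowerCentralSeries K L L 0 := by simp

lemma lcs_one_le (e1 en : L)
    (htop : (⊤ : Submodule K L) ≤ Submodule.span K {e1, en} ⊔
      LieSubmodule.toSubmodule (LieModule.lowerCentralSeries K L L 1)) :
    LieSubmodule.toSubmodule (LieModule.lowerCentralSeries K L L 1) ≤
      Submodule.span K {⁅e1, en⁆} ⊔
        LieSubmodule.toSubmodule (LieModule.lowerCentralSeries K L L 2) := by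
  set S := Submodule.span K {⁅e1, en⁆} ⊔
    LieSubmodule.toSubmodule (LieModule.lowerCentralSeries K L L 2) with hS
  rw [show (1 : ℕ) = 0 + 1 by rfl, LieModule.lowerCentralSeries_succ,
    LieSubmodule.lieIdeal_oper_eq_linear_span', Submodule.span_le]
  rintro m ⟨a, -, b, -, rfl⟩
  obtain ⟨a0, ha0, a', ha', rfl⟩ := Submodule.mem_sup.mp (htop (Submodule.mem_top (x := a)))
  obtain ⟨α, β, rfl⟩ := Submodule.mem_span_pair.mp ha0
  obtain ⟨b0, hb0, b', hb', rfl⟩ := Submodule.mem_sup.mp (htop (Submodule.mem_top (x := b)))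
  obtain ⟨γ, δ, rfl⟩ := Submodule.mem_span_pair.mp hb0
  rw [LieSubmodule.mem_toSubmodule] at ha' hb'
  have k1 : ⁅e1, en⁆ ∈ S := Submodule.mem_sup_left (Submodule.subset_span rfl)
  have k2 : ⁅en, e1⁆ ∈ S := by rw [← lie_skew]; exact neg_mem k1
  have k3 : ⁅e1, e1⁆ ∈ S := by rw [lie_self]; exact zero_mem S
  have k4 : ⁅en, en⁆ ∈ S := by rw [lie_self]; exact zero_mem S
  have hup : ∀ c : L, ⁅c, b'⁆ ∈ S := by
    intro c
    refine Submodule.mem_sup_right ?_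
    rw [LieSubmodule.mem_toSubmodule, show (2 : ℕ) = 1 + 1 by rfl,
      LieModule.lowerCentralSeries_succ]
    exact LieSubmodule.lie_mem_lie trivial hb'
  have hdown : ∀ c : L, ⁅a', c⁆ ∈ S := by
    intro c
    refine Submodule.mem_sup_right ?_
    rw [LieSubmodule.mem_toSubmodule]
    have := lie_mem_lcs_add 0 1 a' c ha' (mem_lcs_zero c)
    rwa [show 1 + 0 + 1 = 2 by rfl] at this
  simp only [SetLike.mem_coe, add_lie, lie_add, smul_lie, lie_smul]
  repeat
    first
      | exact k1 | exact k2 | exact k3 | exact k4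
      | exact hup _ | exact hdown _
      | apply Submodule.add_mem
      | apply Submodule.smul_mem

lemma lcs_succ_le (e1 en x : L) (j : ℕ)
    (htop : (⊤ : Submodule K L) ≤ Submodule.span K {e1, en} ⊔
      LieSubmodule.toSubmodule (LieModule.lowerCentralSeries K L L 1))
    (hx : x ∈ LieModule.lowerCentralSeries K L L j)
    (hspan : LieSubmodule.toSubmodule (LieModule.lowerCentralSeries K L L j) ≤
      Submodule.span K {x} ⊔ LieSubmodule.toSubmodule (LieModule.lowerCentralSeries K L L (j + 1))) :
    LieSubmodule.toSubmodule (LieModule.lowerCentralSeries K L L (j + 1)) ≤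
      Submodule.span K {⁅e1, x⁆, ⁅x, en⁆} ⊔
        LieSubmodule.toSubmodule (LieModule.lowerCentralSeries K L L (j + 2)) := by
  set S := Submodule.span K {⁅e1, x⁆, ⁅x, en⁆} ⊔
    LieSubmodule.toSubmodule (LieModule.lowerCentralSeries K L L (j + 2)) with hS
  rw [LieModule.lowerCentralSeries_succ, LieSubmodule.lieIdeal_oper_eq_linear_span',
    Submodule.span_le]
  rintro m ⟨a, -, b, hb, rfl⟩
  obtain ⟨a0, ha0, a', ha', rfl⟩ := Submodule.mem_sup.mp (htop (Submodule.mem_top (x := a)))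
  obtain ⟨α, β, rfl⟩ := Submodule.mem_span_pair.mp ha0
  obtain ⟨b0, hb0, b', hb', rfl⟩ := Submodule.mem_sup.mp (hspan hb)
  obtain ⟨γ, rfl⟩ := Submodule.mem_span_singleton.mp hb0
  rw [LieSubmodule.mem_toSubmodule] at ha' hb'
  have k1 : ⁅e1, x⁆ ∈ S := Submodule.mem_sup_left (Submodule.subset_span (by simp))
  have k2 : ⁅en, x⁆ ∈ S := by
    rw [← lie_skew]
    exact neg_mem (Submodule.mem_sup_left (Submodule.subset_span (by simp)))
  have hup : ∀ c : L, ⁅c, b'⁆ ∈ S := by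
    intro c
    refine Submodule.mem_sup_right ?_
    rw [LieSubmodule.mem_toSubmodule, show j + 2 = (j + 1) + 1 by rfl,
      LieModule.lowerCentralSeries_succ]
    exact LieSubmodule.lie_mem_lie trivial hb'
  have hdown : ⁅a', x⁆ ∈ S := by
    refine Submodule.mem_sup_right ?_
    rw [LieSubmodule.mem_toSubmodule]
    have := lie_mem_lcs_add j 1 a' x ha' hx
    rwa [show 1 + j + 1 = j + 2 by omega] at this
  simp only [SetLike.mem_coe, add_lie, lie_add, smul_lie, lie_smul]
  repeat
    first
      | exact k1 | exact k2 | exact hup _ | exact hdown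
      | apply Submodule.add_mem
      | apply Submodule.smul_mem

open Classical in
noncomputable def filSeq (K : Type*) [Field K] {L : Type*} [LieRing L] [LieAlgebra K L]
    (e1 en : L) : ℕ → L
  | 0 => ⁅e1, en⁆
  | m + 1 =>
    if ⁅e1, filSeq K e1 en m⁆ ∉ LieModule.lowerCentralSeries K L L (m + 3) then
      ⁅e1, filSeq K e1 en m⁆
    else ⁅filSeq K e1 en m, en⁆

lemma filSeq_zero (e1 en : L) : filSeq K e1 en 0 = ⁅e1, en⁆ := by rw [filSeq]

lemma filSeq_succ_or (e1 en : L) (m : ℕ) :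
    filSeq K e1 en (m + 1) = ⁅e1, filSeq K e1 en m⁆ ∨
      filSeq K e1 en (m + 1) = ⁅filSeq K e1 en m, en⁆ := by
  rw [filSeq]
  split
  · exact Or.inl rfl
  · exact Or.inr rfl

lemma filSeq_succ_of_not (e1 en : L) (m : ℕ)
    (h : ⁅e1, filSeq K e1 en m⁆ ∉ LieModule.lowerCentralSeries K L L (m + 3)) :
    filSeq K e1 en (m + 1) = ⁅e1, filSeq K e1 en m⁆ := by
  rw [filSeq, if_pos h]

lemma filSeq_succ_of_mem (e1 en : L) (m : ℕ)
    (h : ⁅e1, filSeq K e1 en m⁆ ∈ LieModule.lowerCentralSeries K L L (m + 3)) :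
    filSeq K e1 en (m + 1) = ⁅filSeq K e1 en m, en⁆ := by
  rw [filSeq, if_neg (not_not.mpr h)]

end Aux

variable (K : Type*) [Field K]

/-- `L` is an `n`-dimensional filiform Lie algebra over `K`: the `k`-th term `C^k(L)` of the
lower central series (with `C^1(L) = L`) has dimension `n - k` for all `2 ≤ k ≤ n`. -/
def IsFiliform (L : Type*) [LieRing L] [LieAlgebra K L] (n : ℕ) : Prop :=
  Module.finrank K L = n ∧
    ∀ k : ℕ, 2 ≤ k → k ≤ n →
      Module.finrank K (LieModule.lowerCentralSeries K L L (k - 1)) = n - k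

/-- Every finite-dimensional filiform Lie algebra has a filiform basis, i.e. a basis
`e_1, …, e_n` (indexed here by `Fin n`) compatible with the lower central series
(`C^k(L) = ⟨e_2, …, e_{n-k+1}⟩` for `2 ≤ k ≤ n`) and such that for every `3 ≤ i ≤ n`
either `⁅e_1, e_i⁆ = e_{i-1}` or `⁅e_i, e_n⁆ = e_{i-1}`. -/
theorem filiform_basis_exists (L : Type*) [LieRing L] [LieAlgebra K L] [Module.Finite K L]
    (n : ℕ) (hfil : IsFiliform K L n) :
    ∃ e : Module.Basis (Fin n) K L,
      (∀ k : ℕ, 2 ≤ k → k ≤ n →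
        LieSubmodule.toSubmodule (LieModule.lowerCentralSeries K L L (k - 1)) =
          Submodule.span K (⇑e '' {j : Fin n | 1 ≤ (j : ℕ) ∧ (j : ℕ) ≤ n - k})) ∧
      (∀ (i : ℕ) (h3 : 3 ≤ i) (hn : i ≤ n),
        ⁅e ⟨0, by omega⟩, e ⟨i - 1, by omega⟩⁆ = e ⟨i - 2, by omega⟩ ∨
        ⁅e ⟨i - 1, by omega⟩, e ⟨n - 1, by omega⟩⁆ = e ⟨i - 2, by omega⟩) := by
  classical
  obtain ⟨hdim, hlcs⟩ := hfil
  by_cases hn3 : 3 ≤ n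
  swap
  · -- degenerate cases n ≤ 2
    refine ⟨Module.finBasisOfFinrankEq K L hdim, ?_, ?_⟩
    · intro k hk2 hkn
      have hk : k = 2 ∧ n = 2 := by omega
      obtain ⟨rfl, hn2⟩ := hk
      have hset : {j : Fin n | 1 ≤ (j : ℕ) ∧ (j : ℕ) ≤ n - 2} = (∅ : Set (Fin n)) := by
        ext j
        have := j.isLt
        simp only [Set.mem_setOf_eq, Set.mem_empty_iff_false, iff_false, not_and]
        omega
      rw [hset, Set.image_empty, Submodule.span_empty]
      have h0 : Module.finrank K
          (LieSubmodule.toSubmodule (LieModule.lowerCentralSeries K L L (2 - 1))) = 0 := by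
        have h' : Module.finrank K
            (LieSubmodule.toSubmodule (LieModule.lowerCentralSeries K L L (2 - 1))) = n - 2 :=
          hlcs 2 le_rfl hkn
        omega
      rw [Submodule.finrank_eq_zero] at h0
      exact h0
    · intro i h3 hin
      omega
  -- main case : n ≥ 3
  have hr : ∀ m, 1 ≤ m → m ≤ n - 1 →
      Module.finrank K
        (LieSubmodule.toSubmodule (LieModule.lowerCentralSeries K L L m)) = n - m - 1 := by
    intro m h1 h2
    have h' : Module.finrank K
        (LieSubmodule.toSubmodule (LieModule.lowerCentralSeries K L L (m + 1 - 1))) = n - (m + 1) :=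
      hlcs (m + 1) (by omega) (by omega)
    rw [show m + 1 - 1 = m by omega] at h'
    omega
  have hmono : ∀ m : ℕ, LieSubmodule.toSubmodule (LieModule.lowerCentralSeries K L L (m + 1)) ≤
      LieSubmodule.toSubmodule (LieModule.lowerCentralSeries K L L m) := fun m =>
    (LieSubmodule.toSubmodule_le_toSubmodule _ _).mpr
      (LieModule.antitone_lowerCentralSeries K L L (Nat.le_succ m))
  have hbot : LieSubmodule.toSubmodule (LieModule.lowerCentralSeries K L L (n - 1)) = ⊥ :=
    Submodule.finrank_eq_zero.mp (by rw [hr (n - 1) (by omega) (by omega)]; omega)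
  -- choose e1 en spanning L modulo C²
  obtain ⟨e1, en, htop⟩ : ∃ e1 en : L, (⊤ : Submodule K L) ≤ Submodule.span K {e1, en} ⊔
      LieSubmodule.toSubmodule (LieModule.lowerCentralSeries K L L 1) := by
    set p := LieSubmodule.toSubmodule (LieModule.lowerCentralSeries K L L 1) with hp
    have hq : Module.finrank K (L ⧸ p) = 2 := by
      have h1 := Submodule.finrank_quotient_add_finrank p
      have h2 := hr 1 (by omega) (by omega)
      rw [← hp] at h2
      omega
    let q := Module.finBasisOfFinrankEq K (L ⧸ p) hq
    obtain ⟨e1, he1⟩ := Submodule.mkQ_surjective p (q 0)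
    obtain ⟨en, hen⟩ := Submodule.mkQ_surjective p (q 1)
    refine ⟨e1, en, fun x _ => ?_⟩
    have hrepr := q.sum_repr (p.mkQ x)
    rw [Fin.sum_univ_two] at hrepr
    set c0 := q.repr (p.mkQ x) 0 with hc0
    set c1 := q.repr (p.mkQ x) 1 with hc1
    have hker : x - (c0 • e1 + c1 • en) ∈ p := by
      rw [← Submodule.ker_mkQ p, LinearMap.mem_ker, map_sub, map_add, map_smul, map_smul,
        he1, hen, hrepr, sub_self]
    exact Submodule.mem_sup.mpr ⟨c0 • e1 + c1 • en, Submodule.mem_span_pair.mpr ⟨c0, c1, rfl⟩,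
      x - (c0 • e1 + c1 • en), hker, by abel⟩
  -- generic one-dimensional-quotient principle
  have hone : ∀ m (x : L), 1 ≤ m → m ≤ n - 2 → x ∈ LieModule.lowerCentralSeries K L L m →
      x ∉ LieSubmodule.toSubmodule (LieModule.lowerCentralSeries K L L (m + 1)) →
      LieSubmodule.toSubmodule (LieModule.lowerCentralSeries K L L m) =
        Submodule.span K {x} ⊔
          LieSubmodule.toSubmodule (LieModule.lowerCentralSeries K L L (m + 1)) := by
    intro m x h1 h2 hx hx'
    have hle : Submodule.span K {x} ⊔
        LieSubmodule.toSubmodule (LieModule.lowerCentralSeries K L L (m + 1)) ≤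
        LieSubmodule.toSubmodule (LieModule.lowerCentralSeries K L L m) :=
      sup_le ((Submodule.span_singleton_le_iff_mem _ _).mpr hx) (hmono m)
    have hlt : LieSubmodule.toSubmodule (LieModule.lowerCentralSeries K L L (m + 1)) <
        Submodule.span K {x} ⊔
          LieSubmodule.toSubmodule (LieModule.lowerCentralSeries K L L (m + 1)) := by
      refine lt_of_le_of_ne le_sup_right (fun h => hx' ?_)
      exact h ▸ Submodule.mem_sup_left (Submodule.mem_span_singleton_self x)
    have h3 := Submodule.finrank_lt_finrank_of_lt hlt
    have h4 := Submodule.finrank_mono hle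
    have h5 := hr m h1 (by omega)
    have h6 := hr (m + 1) (by omega) (by omega)
    exact (Submodule.eq_of_le_of_finrank_le hle (by omega)).symm
  have htwo : ∀ m (x : L), 1 ≤ m → m + 2 ≤ n - 1 → x ∈ LieModule.lowerCentralSeries K L L m →
      LieSubmodule.toSubmodule (LieModule.lowerCentralSeries K L L m) =
        Submodule.span K {x} ⊔
          LieSubmodule.toSubmodule (LieModule.lowerCentralSeries K L L (m + 1)) →
      ⁅e1, x⁆ ∉ LieSubmodule.toSubmodule (LieModule.lowerCentralSeries K L L (m + 2)) ∨
        ⁅x, en⁆ ∉ LieSubmodule.toSubmodule (LieModule.lowerCentralSeries K L L (m + 2)) := by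
    intro m x h1 h2 hx hspan
    by_contra hcon
    push_neg at hcon
    obtain ⟨ha, hb⟩ := hcon
    have hstep := lcs_succ_le e1 en x m htop hx hspan.le
    have hle2 : Submodule.span K {⁅e1, x⁆, ⁅x, en⁆} ⊔
        LieSubmodule.toSubmodule (LieModule.lowerCentralSeries K L L (m + 2)) ≤
        LieSubmodule.toSubmodule (LieModule.lowerCentralSeries K L L (m + 2)) := by
      refine sup_le (Submodule.span_le.mpr ?_) le_rfl
      rintro y (rfl | rfl)
      · exact ha
      · exact hb
    have hle3 := le_trans hstep hle2
    have heq := le_antisymm hle3 (hmono (m + 1))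
    have h5 := hr (m + 1) (by omega) (by omega)
    have h6 := hr (m + 2) (by omega) (by omega)
    rw [heq] at h5
    omega
  -- the recursively defined sequence
  set w := filSeq K e1 en with hwdef
  have Inv : ∀ j, j + 1 ≤ n - 2 → w j ∈ LieModule.lowerCentralSeries K L L (j + 1) ∧
      LieSubmodule.toSubmodule (LieModule.lowerCentralSeries K L L (j + 1)) =
        Submodule.span K {w j} ⊔
          LieSubmodule.toSubmodule (LieModule.lowerCentralSeries K L L (j + 2)) := by
    intro j
    induction j with
    | zero =>
      intro h
      have hz : w 0 ∈ LieModule.lowerCentralSeries K L L 1 := by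
        rw [hwdef, filSeq_zero]
        have := lie_mem_lcs_add (K := K) 0 0 e1 en (mem_lcs_zero e1) (mem_lcs_zero en)
        rwa [show 0 + 0 + 1 = 1 by rfl] at this
      have hb : LieSubmodule.toSubmodule (LieModule.lowerCentralSeries K L L 1) ≤
          Submodule.span K {w 0} ⊔
            LieSubmodule.toSubmodule (LieModule.lowerCentralSeries K L L 2) := by
        rw [hwdef, filSeq_zero]
        exact lcs_one_le e1 en htop
      have hnot : w 0 ∉ LieSubmodule.toSubmodule (LieModule.lowerCentralSeries K L L 2) := by
        intro hmem
        have hle : LieSubmodule.toSubmodule (LieModule.lowerCentralSeries K L L 1) ≤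
            LieSubmodule.toSubmodule (LieModule.lowerCentralSeries K L L 2) :=
          le_trans hb (sup_le ((Submodule.span_singleton_le_iff_mem _ _).mpr hmem) le_rfl)
        have heq := le_antisymm hle (hmono 1)
        have h5 := hr 1 (by omega) (by omega)
        have h6 := hr 2 (by omega) (by omega)
        rw [heq] at h5
        omega
      exact ⟨hz, hone 1 (w 0) (by omega) (by omega) hz hnot⟩
    | succ j ih =>
      intro h
      obtain ⟨hmem, hspan⟩ := ih (by omega)
      have hf : ⁅e1, w j⁆ ∈ LieModule.lowerCentralSeries K L L (j + 2) := by
        have := lie_mem_lcs_add (K := K) (j + 1) 0 e1 (w j) (mem_lcs_zero e1) hmem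
        rwa [show 0 + (j + 1) + 1 = j + 2 by omega] at this
      have hg : ⁅w j, en⁆ ∈ LieModule.lowerCentralSeries K L L (j + 2) := by
        have := lie_mem_lcs_add (K := K) 0 (j + 1) (w j) en hmem (mem_lcs_zero en)
        rwa [show j + 1 + 0 + 1 = j + 2 by omega] at this
      have hor := htwo (j + 1) (w j) (by omega) (by omega) hmem hspan
      by_cases hc : ⁅e1, w j⁆ ∉ LieModule.lowerCentralSeries K L L (j + 3)
      · have hwsucc : w (j + 1) = ⁅e1, w j⁆ := by
          rw [hwdef] at hc ⊢
          exact filSeq_succ_of_not e1 en j hc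
        refine ⟨hwsucc ▸ hf, hwsucc ▸ hone (j + 2) ⁅e1, w j⁆ (by omega) (by omega) hf hc⟩
      · rw [not_not] at hc
        have hgnot : ⁅w j, en⁆ ∉ LieModule.lowerCentralSeries K L L (j + 3) := by
          rcases hor with h' | h'
          · exact absurd hc h'
          · exact h'
        have hwsucc : w (j + 1) = ⁅w j, en⁆ := by
          rw [hwdef] at hc ⊢
          exact filSeq_succ_of_mem e1 en j hc
        refine ⟨hwsucc ▸ hg, hwsucc ▸ hone (j + 2) ⁅w j, en⁆ (by omega) (by omega) hg hgnot⟩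
  have hdisj : ∀ j, w (j + 1) = ⁅e1, w j⁆ ∨ w (j + 1) = ⁅w j, en⁆ := by
    intro j
    rw [hwdef]
    exact filSeq_succ_or e1 en j
  -- the spanning chain
  have chain : ∀ d m, 1 ≤ m → m ≤ n - 1 → n - 1 - m ≤ d →
      LieSubmodule.toSubmodule (LieModule.lowerCentralSeries K L L m) =
        Submodule.span K (w '' {i : ℕ | m ≤ i + 1 ∧ i ≤ n - 3}) := by
    intro d
    induction d with
    | zero =>
      intro m h1 h2 h3
      have hset : {i : ℕ | m ≤ i + 1 ∧ i ≤ n - 3} = ∅ := by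
        ext i; simp only [Set.mem_setOf_eq, Set.mem_empty_iff_false, iff_false, not_and]; omega
      rw [hset, Set.image_empty, Submodule.span_empty, show m = n - 1 by omega]
      exact hbot
    | succ d ih =>
      intro m h1 h2 h3
      by_cases hm : m = n - 1
      · have hset : {i : ℕ | m ≤ i + 1 ∧ i ≤ n - 3} = ∅ := by
          ext i; simp only [Set.mem_setOf_eq, Set.mem_empty_iff_false, iff_false, not_and]; omega
        rw [hset, Set.image_empty, Submodule.span_empty, show m = n - 1 by omega]
        exact hbot
      · have hInv := Inv (m - 1) (by omega)
        rw [show m = m - 1 + 1 by omega, hInv.2, ih (m - 1 + 2) (by omega) (by omega) (by omega),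
          ← Submodule.span_insert, ← Set.image_insert_eq]
        have hsets : insert (m - 1) {i : ℕ | m - 1 + 2 ≤ i + 1 ∧ i ≤ n - 3} =
            {i : ℕ | m - 1 + 1 ≤ i + 1 ∧ i ≤ n - 3} := by
          ext i
          simp only [Set.mem_insert_iff, Set.mem_setOf_eq]
          omega
        rw [hsets]
  -- the basis
  set b : Fin n → L := fun i => if (i : ℕ) = 0 then e1 else if (i : ℕ) = n - 1 then en
    else w (n - 2 - (i : ℕ)) with hbdef
  have hb0 : ∀ i : Fin n, (i : ℕ) = 0 → b i = e1 := by
    intro i h; simp only [hbdef]; rw [if_pos h]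
  have hbn : ∀ i : Fin n, (i : ℕ) = n - 1 → b i = en := by
    intro i h; simp only [hbdef]; rw [if_neg (by omega), if_pos h]
  have hb1 : ∀ i : Fin n, (i : ℕ) ≠ 0 → (i : ℕ) ≠ n - 1 → b i = w (n - 2 - (i : ℕ)) := by
    intro i h1 h2; simp only [hbdef]; rw [if_neg h1, if_neg h2]
  have hbspan : (⊤ : Submodule K L) ≤ Submodule.span K (Set.range b) := by
    refine le_trans htop (sup_le ?_ ?_)
    · rw [Submodule.span_le]
      rintro y (rfl | rfl)
      · exact Submodule.subset_span ⟨⟨0, by omega⟩, hb0 ⟨0, by omega⟩ rfl⟩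
      · exact Submodule.subset_span ⟨⟨n - 1, by omega⟩, hbn ⟨n - 1, by omega⟩ rfl⟩
    · rw [chain n 1 (by omega) (by omega) (by omega), Submodule.span_le]
      rintro y ⟨i, ⟨hi1, hi2⟩, rfl⟩
      refine Submodule.subset_span ⟨⟨n - 2 - i, by omega⟩, ?_⟩
      rw [hb1 ⟨n - 2 - i, by omega⟩ (by simp; omega) (by simp; omega)]
      show w _ = w i
      congr 1
      simp
      omega
  let e : Module.Basis (Fin n) K L := basisOfTopLeSpanOfCardEqFinrank b hbspan
    (by rw [Fintype.card_fin, hdim])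
  have hecoe : ⇑e = b := coe_basisOfTopLeSpanOfCardEqFinrank b _ _
  refine ⟨e, ?_, ?_⟩
  · intro k hk2 hkn
    rw [hecoe]
    have hsets : b '' {j : Fin n | 1 ≤ (j : ℕ) ∧ (j : ℕ) ≤ n - k} =
        w '' {i : ℕ | k - 1 ≤ i + 1 ∧ i ≤ n - 3} := by
      ext y
      simp only [Set.mem_image, Set.mem_setOf_eq]
      constructor
      · rintro ⟨j, ⟨hj1, hj2⟩, rfl⟩
        have hjlt := j.isLt
        refine ⟨n - 2 - (j : ℕ), ⟨by omega, by omega⟩, ?_⟩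
        rw [hb1 j (by omega) (by omega)]
      · rintro ⟨i, ⟨hi1, hi2⟩, rfl⟩
        refine ⟨⟨n - 2 - i, by omega⟩, ⟨by simp; omega, by simp; omega⟩, ?_⟩
        rw [hb1 ⟨n - 2 - i, by omega⟩ (by simp; omega) (by simp; omega)]
        show w _ = w i
        congr 1
        simp
        omega
    rw [hsets, chain n (k - 1) (by omega) (by omega) (by omega)]
  · intro i h3 hin
    rw [hecoe]
    rw [hb0 ⟨0, by omega⟩ rfl]
    by_cases hi : i = n
    · left
      rw [hbn ⟨i - 1, by omega⟩ (by simp; omega),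
        hb1 ⟨i - 2, by omega⟩ (by simp; omega) (by simp; omega)]
      show ⁅e1, en⁆ = w (n - 2 - (i - 2))
      rw [show n - 2 - (i - 2) = 0 by omega]
      rw [hwdef, filSeq_zero]
    · rw [hb1 ⟨i - 1, by omega⟩ (by simp; omega) (by simp; omega),
        hb1 ⟨i - 2, by omega⟩ (by simp; omega) (by simp; omega),
        hbn ⟨n - 1, by omega⟩ (by simp)]
      show ⁅e1, w (n - 2 - (i - 1))⁆ = w (n - 2 - (i - 2)) ∨
        ⁅w (n - 2 - (i - 1)), en⁆ = w (n - 2 - (i - 2))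
      rw [show n - 2 - (i - 2) = (n - 2 - (i - 1)) + 1 by omega]
      rcases hdisj (n - 2 - (i - 1)) with h' | h'
      · exact Or.inl h'.symm
      · exact Or.inr h'.symm
end

section
/- If g' is an n-dimensional filiform Lie algebra over a field K that is isotopic to the n-dimensional model filiform Lie algebra over K, then g' is isomorphic to the n-dimensional model filiform Lie algebra. -/
variable (K : Type*) [Field K]

/-- Two Lie algebras are isotopic if there are three bijective linear maps `f, g, h`
with `⁅f u, g v⁆ = h ⁅u, v⁆` for all `u, v`. -/
def LieIsotopic (L L' : Type*) [LieRing L] [LieAlgebra K L] [LieRing L'] [LieAlgebra K L'] :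
    Prop :=
  ∃ f g h : L ≃ₗ[K] L', ∀ u v : L, ⁅f u, g v⁆ = h ⁅u, v⁆

/-- `M` is the `n`-dimensional model filiform Lie algebra: it has a basis `e_1, …, e_n`
(indexed by `Fin n`) whose only nonzero brackets among basis elements `e_i, e_j` with
`i < j` are `⁅e_1, e_{i+1}⁆ = e_i` for `2 ≤ i ≤ n - 1`. -/
def IsModelFiliform (M : Type*) [LieRing M] [LieAlgebra K M] (n : ℕ)
    (e : Module.Basis (Fin n) K M) : Prop :=
  ∀ i j : Fin n, (i : ℕ) < (j : ℕ) →
    ⁅e i, e j⁆ = if (i : ℕ) = 0 ∧ 2 ≤ (j : ℕ)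
      then e ⟨(j : ℕ) - 1, Nat.lt_of_le_of_lt (Nat.sub_le _ _) j.isLt⟩ else 0

section Helpers

variable {F : Type*} [Field F]

private theorem bilin_ext {L N : Type*} [AddCommGroup L] [Module F L]
    [AddCommGroup N] [Module F N] {ι : Type*} (b : Module.Basis ι F L)
    {B₁ B₂ : L →ₗ[F] L →ₗ[F] N}
    (h : ∀ i j, B₁ (b i) (b j) = B₂ (b i) (b j)) (x y : L) : B₁ x y = B₂ x y := by
  have : B₁ = B₂ := b.ext fun i => b.ext fun j => h i j
  rw [this]

private theorem lie_eq_of_basis {L : Type*} [LieRing L] [LieAlgebra F L]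
    {ι : Type*} (b : Module.Basis ι F L) (G : L →ₗ[F] L →ₗ[F] L)
    (h : ∀ i j, ⁅b i, b j⁆ = G (b i) (b j)) (x y : L) : ⁅x, y⁆ = G x y := by
  let B : L →ₗ[F] L →ₗ[F] L :=
    LinearMap.mk₂ F (fun x y => ⁅x, y⁆) add_lie smul_lie lie_add lie_smul
  have : ∀ x y, B x y = G x y := bilin_ext b (fun i j => by simpa [B] using h i j)
  simpa [B] using this x y

private theorem map_lie_of_basis {L M : Type*} [LieRing L] [LieAlgebra F L]
    [LieRing M] [LieAlgebra F M] {ι : Type*} (b : Module.Basis ι F L) (T : L →ₗ[F] M)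
    (h : ∀ i j, T ⁅b i, b j⁆ = ⁅T (b i), T (b j)⁆) (x y : L) :
    T ⁅x, y⁆ = ⁅T x, T y⁆ := by
  let B₁ : L →ₗ[F] L →ₗ[F] M := LinearMap.mk₂ F (fun x y => T ⁅x, y⁆)
    (fun a b c => by simp [add_lie]) (fun t a c => by simp [smul_lie])
    (fun a b c => by simp [lie_add]) (fun t a c => by simp [lie_smul])
  let B₂ : L →ₗ[F] L →ₗ[F] M := LinearMap.mk₂ F (fun x y => ⁅T x, T y⁆)
    (fun a b c => by simp [add_lie]) (fun t a c => by simp [smul_lie])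
    (fun a b c => by simp [lie_add]) (fun t a c => by simp [lie_smul])
  have : ∀ x y, B₁ x y = B₂ x y := bilin_ext b (fun i j => by simpa [B₁, B₂] using h i j)
  simpa [B₁, B₂] using this x y

private theorem nonempty_lieEquiv {L M : Type*} [LieRing L] [LieAlgebra F L]
    [LieRing M] [LieAlgebra F M] (T : L ≃ₗ[F] M)
    (hT : ∀ x y : L, T ⁅x, y⁆ = ⁅T x, T y⁆) : Nonempty (L ≃ₗ⁅F⁆ M) :=
  ⟨{ toLinearMap := (T : L →ₗ[F] M), map_lie' := fun {x y} => hT x y,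
     invFun := T.symm, left_inv := T.left_inv, right_inv := T.right_inv }⟩

private noncomputable def modelD {n : ℕ} {M : Type*} [LieRing M]
    [LieAlgebra F M] (e : Module.Basis (Fin n) F M) : M →ₗ[F] M :=
  e.constr F fun j => if 2 ≤ (j : ℕ) then
    e ⟨(j : ℕ) - 1, Nat.lt_of_le_of_lt (Nat.sub_le _ _) j.isLt⟩ else 0

private theorem modelD_apply {n : ℕ} {M : Type*} [LieRing M]
    [LieAlgebra F M] (e : Module.Basis (Fin n) F M) (j : Fin n) :
    modelD e (e j) = if 2 ≤ (j : ℕ) then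
      e ⟨(j : ℕ) - 1, Nat.lt_of_le_of_lt (Nat.sub_le _ _) j.isLt⟩ else 0 :=
  e.constr_basis F _ j

private theorem coord_basis {n : ℕ} {M : Type*} [LieRing M]
    [LieAlgebra F M] (e : Module.Basis (Fin n) F M) (i k : Fin n) :
    e.coord k (e i) = if i = k then 1 else 0 := by
  simp [Module.Basis.coord_apply, Module.Basis.repr_self, Finsupp.single_apply]

end Helpers

section Model

variable {F : Type*} [Field F]

private theorem model_bracket {n : ℕ} {M : Type*} [LieRing M] [LieAlgebra F M]
    (e : Module.Basis (Fin n) F M) (hM : IsModelFiliform F M n e) (h0 : 0 < n) (x y : M) :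
    ⁅x, y⁆ = e.coord ⟨0, h0⟩ x • modelD e y - e.coord ⟨0, h0⟩ y • modelD e x := by
  set π := e.coord ⟨0, h0⟩ with hπ
  set D := modelD e with hD
  let G : M →ₗ[F] M →ₗ[F] M := LinearMap.mk₂ F (fun x y => π x • D y - π y • D x)
    (fun a b c => by simp [add_smul]; abel)
    (fun t a c => by simp [smul_smul, smul_sub, mul_comm])
    (fun a b c => by simp [add_smul]; abel)
    (fun t a c => by simp [smul_smul, smul_sub, mul_comm])
  have key : ∀ i j : Fin n, ⁅e i, e j⁆ = G (e i) (e j) := by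
    have main : ∀ i j : Fin n, (i : ℕ) < (j : ℕ) → ⁅e i, e j⁆ = G (e i) (e j) := by
      intro i j hij
      have hj0 : ¬ (j = ⟨0, h0⟩) := by
        intro hh
        rw [hh] at hij; simp at hij
      rw [hM i j hij]
      simp only [G, LinearMap.mk₂_apply, hπ, coord_basis, hD, modelD_apply]
      rw [if_neg hj0]
      by_cases hi : i = ⟨0, h0⟩
      · have : (i : ℕ) = 0 := by rw [hi]
        rw [if_pos hi]
        simp only [this, true_and]
        split_ifs <;> simp
      · have : ¬ ((i : ℕ) = 0) := by
          intro hh; exact hi (Fin.ext hh)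
        rw [if_neg hi]
        simp [this]
    intro i j
    rcases lt_trichotomy (i : ℕ) (j : ℕ) with hlt | heq | hgt
    · exact main i j hlt
    · have : i = j := Fin.ext heq
      subst this
      simp [G]
    · have h1 : ⁅e i, e j⁆ = -⁅e j, e i⁆ := by rw [← lie_skew]
      rw [h1, main j i hgt]
      simp only [G, LinearMap.mk₂_apply]
      abel
  exact lie_eq_of_basis e G key x y

end Model

section Cases

variable {F : Type*} [Field F]

private theorem lcs_le_submodule {L : Type*} [LieRing L] [LieAlgebra F L] (k : ℕ)
    (S : Submodule F L)
    (hS : ∀ x z : L, z ∈ LieModule.lowerCentralSeries F L L k → ⁅x, z⁆ ∈ S) :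
    (LieModule.lowerCentralSeries F L L (k + 1)).toSubmodule ≤ S := by
  rw [LieModule.lowerCentralSeries_succ, LieSubmodule.lieIdeal_oper_eq_linear_span']
  rw [Submodule.span_le]
  rintro m ⟨x, -, z, hz, rfl⟩
  exact hS x z hz

private theorem lie_mem_lcs_succ {L : Type*} [LieRing L] [LieAlgebra F L] (k : ℕ)
    (x z : L) (hz : z ∈ LieModule.lowerCentralSeries F L L k) :
    ⁅x, z⁆ ∈ LieModule.lowerCentralSeries F L L (k + 1) := by
  rw [LieModule.lowerCentralSeries_succ]
  exact LieSubmodule.lie_mem_lie trivial hz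

private theorem finrank_lcs_coe {L : Type*} [LieRing L] [LieAlgebra F L] (k : ℕ) :
    Module.finrank F (LieModule.lowerCentralSeries F L L k) =
    Module.finrank F ((LieModule.lowerCentralSeries F L L k).toSubmodule) := rfl

private theorem case_small {n : ℕ} (hn : n ≤ 2) {M : Type*} [LieRing M] [LieAlgebra F M]
    (e : Module.Basis (Fin n) F M) (hM : IsModelFiliform F M n e)
    {L' : Type*} [LieRing L'] [LieAlgebra F L']
    (hisot : LieIsotopic F M L') : Nonempty (L' ≃ₗ⁅F⁆ M) := by
  obtain ⟨f, g, h, hiso⟩ := hisot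
  have habM : ∀ x y : M, ⁅x, y⁆ = 0 := by
    intro x y
    have := lie_eq_of_basis e (0 : M →ₗ[F] M →ₗ[F] M) ?_ x y
    · simpa using this
    intro i j
    simp only [LinearMap.zero_apply]
    rcases lt_trichotomy (i : ℕ) (j : ℕ) with hlt | heq | hgt
    · rw [hM i j hlt, if_neg]
      rintro ⟨-, h2⟩
      omega
    · rw [Fin.ext heq, lie_self]
    · rw [← lie_skew, hM j i hgt, if_neg]
      · simp
      rintro ⟨-, h2⟩
      omega
  have habL : ∀ x y : L', ⁅x, y⁆ = 0 := by
    intro x y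
    calc ⁅x, y⁆ = ⁅f (f.symm x), g (g.symm y)⁆ := by simp
    _ = h ⁅f.symm x, g.symm y⁆ := hiso _ _
    _ = 0 := by rw [habM]; simp
  exact nonempty_lieEquiv f.symm fun x y => by rw [habL, habM]; simp

private theorem case_three {M : Type*} [LieRing M] [LieAlgebra F M]
    (e : Module.Basis (Fin 3) F M) (hM : IsModelFiliform F M 3 e)
    {L' : Type*} [LieRing L'] [LieAlgebra F L']
    (hfil : IsFiliform F L' 3) : Nonempty (L' ≃ₗ⁅F⁆ M) := by
  have hfd : FiniteDimensional F L' := Module.finite_of_finrank_pos (by rw [hfil.1]; omega)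
  have hC2 : Module.finrank F (LieModule.lowerCentralSeries F L' L' 1) = 1 :=
    hfil.2 2 le_rfl (by omega)
  have hC3 : (LieModule.lowerCentralSeries F L' L' 2).toSubmodule = ⊥ := by
    have h0 : Module.finrank F ((LieModule.lowerCentralSeries F L' L' 2).toSubmodule) = 0 := by
      rw [← finrank_lcs_coe]
      exact hfil.2 3 (by omega) le_rfl
    exact Submodule.finrank_eq_zero.mp h0
  have hcent : ∀ z x : L', z ∈ LieModule.lowerCentralSeries F L' L' 1 → ⁅z, x⁆ = 0 := by
    intro z x hz
    have : ⁅x, z⁆ ∈ (LieModule.lowerCentralSeries F L' L' 2).toSubmodule :=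
      lie_mem_lcs_succ 1 x z hz
    rw [hC3] at this
    simp only [Submodule.mem_bot] at this
    rw [← lie_skew, this, neg_zero]
  have hex : ∃ u v : L', ⁅u, v⁆ ≠ 0 := by
    by_contra hno
    push_neg at hno
    have : (LieModule.lowerCentralSeries F L' L' 1).toSubmodule ≤ ⊥ := by
      have := lcs_le_submodule (F := F) 0 (⊥ : Submodule F L') (fun x z _ => by
        rw [hno]; exact Submodule.zero_mem _)
      exact this
    have h1 : Module.finrank F ((LieModule.lowerCentralSeries F L' L' 1).toSubmodule) = 0 := by
      rw [le_bot_iff.mp this]; simp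
    rw [← finrank_lcs_coe, hC2] at h1
    omega
  obtain ⟨u, v, huv⟩ := hex
  set z := ⁅u, v⁆ with hzdef
  have hzmem : z ∈ LieModule.lowerCentralSeries F L' L' 1 := by
    have : z ∈ (LieModule.lowerCentralSeries F L' L' (0 + 1)) :=
      lie_mem_lcs_succ 0 u v trivial
    simpa using this
  have huz : ⁅u, z⁆ = 0 := by rw [← lie_skew, hcent z u hzmem, neg_zero]
  have hvz : ⁅v, z⁆ = 0 := by rw [← lie_skew, hcent z v hzmem, neg_zero]
  have hzv : ⁅z, v⁆ = 0 := hcent z v hzmem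
  have li : LinearIndependent F ![u, z, v] := by
    rw [Fintype.linearIndependent_iff]
    intro c hc
    simp only [Fin.sum_univ_three, Matrix.cons_val_zero, Matrix.cons_val_one,
      Matrix.head_cons, Matrix.cons_val_two, Matrix.tail_cons] at hc
    have h1 : c 0 = 0 := by
      have := congrArg (fun t => ⁅t, v⁆) hc
      simp only [add_lie, smul_lie, hzv, lie_self, smul_zero, add_zero, zero_lie] at this
      rw [← hzdef] at this
      exact (smul_eq_zero.mp this).resolve_right huv
    have h2 : c 2 = 0 := by
      have := congrArg (fun t => ⁅u, t⁆) hc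
      simp only [lie_add, lie_smul, huz, lie_self, smul_zero, zero_add, lie_zero,
        ← hzdef] at this
      exact (smul_eq_zero.mp this).resolve_right huv
    have h3 : c 1 = 0 := by
      rw [h1, h2] at hc
      simp only [zero_smul, zero_add, add_zero] at hc
      by_contra hne
      exact huv (by simpa [hzdef, hne] using (smul_eq_zero.mp hc).resolve_left hne)
    intro i
    fin_cases i <;> assumption
  have hzu : ⁅z, u⁆ = 0 := hcent z u hzmem
  have hvu : ⁅v, u⁆ = -z := by rw [← lie_skew]
  let Bb := basisOfLinearIndependentOfCardEqFinrank li (by simp [hfil.1])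
  have hBb : ⇑Bb = ![u, z, v] := coe_basisOfLinearIndependentOfCardEqFinrank li _
  let T := Bb.equiv e (Equiv.refl _)
  have hTB : ∀ i, T (Bb i) = e i := fun i => by simp [T, Module.Basis.equiv_apply]
  have hTu : T u = e 0 := by
    have h0 : u = Bb 0 := by rw [hBb]; rfl
    rw [h0, hTB]
  have hTz : T z = e 1 := by
    have h0 : z = Bb 1 := by rw [hBb]; rfl
    rw [h0, hTB]
  have hTv : T v = e 2 := by
    have h0 : v = Bb 2 := by rw [hBb]; rfl
    rw [h0, hTB]
  have hE01 : ⁅e 0, e 1⁆ = 0 := by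
    have := hM 0 1 (by decide)
    simpa using this
  have hE02 : ⁅e 0, e 2⁆ = e 1 := by
    have := hM 0 2 (by decide)
    rw [this, if_pos (by decide)]
    congr 1
  have hE12 : ⁅e 1, e 2⁆ = 0 := by
    have := hM 1 2 (by decide)
    simpa using this
  have hE10 : ⁅e 1, e 0⁆ = 0 := by rw [← lie_skew, hE01, neg_zero]
  have hE20 : ⁅e 2, e 0⁆ = -e 1 := by rw [← lie_skew, hE02]
  have hE21 : ⁅e 2, e 1⁆ = 0 := by rw [← lie_skew, hE12, neg_zero]
  refine nonempty_lieEquiv T ?_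
  intro x y
  refine map_lie_of_basis Bb (T.toLinearMap) ?_ x y
  intro i j
  have hcoe : ∀ w : L', T.toLinearMap w = T w := fun w => rfl
  have hmk2 : ∀ h : 2 < 3, (⟨2, h⟩ : Fin 3) = 2 := fun _ => rfl
  fin_cases i <;> fin_cases j <;>
    simp only [hmk2, hBb, hcoe, Matrix.cons_val_zero, Matrix.cons_val_one, Matrix.head_cons,
      Matrix.cons_val_two, Matrix.tail_cons, Matrix.cons_val_fin_one, Fin.mk_zero,
      Fin.mk_one, lie_self, huz, hzu, hvz, hzv, hvu, ← hzdef, map_zero, map_neg,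
      hTu, hTz, hTv, hE01, hE02, hE12, hE10, hE20, hE21] <;>
    first
      | rfl
      | (rw [hE02]; rfl)
      | skip

end Cases

section Big

variable {F : Type*} [Field F]

set_option maxHeartbeats 1000000 in
private theorem case_big {m : ℕ} (hm : 3 ≤ m) {M : Type*} [LieRing M] [LieAlgebra F M]
    (e : Module.Basis (Fin (m + 1)) F M) (hM : IsModelFiliform F M (m + 1) e)
    {L' : Type*} [LieRing L'] [LieAlgebra F L']
    (hfil : IsFiliform F L' (m + 1)) (hisot : LieIsotopic F M L') :
    Nonempty (L' ≃ₗ⁅F⁆ M) := by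
  obtain ⟨f, g, h, hiso⟩ := hisot
  have h0 : 0 < m + 1 := Nat.succ_pos m
  have hfd : FiniteDimensional F L' := Module.finite_of_finrank_pos (by rw [hfil.1]; omega)
  set i0 : Fin (m + 1) := ⟨0, h0⟩ with hi0
  set π : M →ₗ[F] F := e.coord i0 with hπdef
  set D : M →ₗ[F] M := modelD e with hDdef
  have hMf : ∀ x y : M, ⁅x, y⁆ = π x • D y - π y • D x := model_bracket e hM h0
  set α : L' →ₗ[F] F := π ∘ₗ (f.symm : L' →ₗ[F] M) with hαdef
  set β : L' →ₗ[F] F := π ∘ₗ (g.symm : L' →ₗ[F] M) with hβdef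
  set P : L' →ₗ[F] L' := (h : M →ₗ[F] L') ∘ₗ (D ∘ₗ (g.symm : L' →ₗ[F] M)) with hPdef
  set Q : L' →ₗ[F] L' := (h : M →ₗ[F] L') ∘ₗ (D ∘ₗ (f.symm : L' →ₗ[F] M)) with hQdef
  have hbr : ∀ x y : L', ⁅x, y⁆ = α x • P y - β y • Q x := by
    intro x y
    have h1 : ⁅x, y⁆ = ⁅f (f.symm x), g (g.symm y)⁆ := by simp
    rw [h1, hiso, hMf]
    simp [hαdef, hβdef, hPdef, hQdef, map_sub, map_smul]
  have hπe : ∀ i : Fin (m + 1), π (e i) = if (i : ℕ) = 0 then 1 else 0 := by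
    intro i
    rw [hπdef, coord_basis]
    by_cases hh : (i : ℕ) = 0
    · rw [if_pos (Fin.ext hh), if_pos hh]
    · rw [if_neg (fun hc => hh (by rw [hc])), if_neg hh]
  have hDe0 : D (e i0) = 0 := by
    rw [hDdef, modelD_apply, if_neg (by simp [hi0])]
  set x₀ : L' := f (e i0) with hx₀def
  have hαx₀ : α x₀ = 1 := by
    rw [hαdef, hx₀def]
    simp [hπe, hi0]
  have hQx₀ : Q x₀ = 0 := by
    rw [hQdef, hx₀def]
    simp [hDe0]
  set y₀ : L' := g (e i0) with hy₀def
  have hβy₀ : β y₀ = 1 := by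
    rw [hβdef, hy₀def]
    simp [hπe, hi0]
  have hPy₀ : P y₀ = 0 := by
    rw [hPdef, hy₀def]
    simp [hDe0]
  have halt : ∀ x : L', α x • P x = β x • Q x := by
    intro x
    have h1 := hbr x x
    rw [lie_self] at h1
    exact sub_eq_zero.mp h1.symm
  have hdec : ∀ x : L', α (x - α x • x₀) = 0 := by
    intro x
    simp [map_sub, map_smul, hαx₀]
  have hC2fr : Module.finrank F (LieModule.lowerCentralSeries F L' L' 1).toSubmodule
      = m - 1 := by
    have h1 := hfil.2 2 le_rfl (by omega)
    rw [← finrank_lcs_coe]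
    rw [show (2:ℕ) - 1 = 1 from rfl, show m + 1 - 2 = m - 1 from by omega] at h1
    exact h1
  have hnotab : ¬ (∀ x y : L', ⁅x, y⁆ = 0) := by
    intro hab
    have hle : (LieModule.lowerCentralSeries F L' L' 1).toSubmodule ≤ ⊥ := by
      have := lcs_le_submodule (F := F) 0 (⊥ : Submodule F L')
        (fun x z _ => by rw [hab]; exact Submodule.zero_mem _)
      simpa using this
    have h2 : Module.finrank F (LieModule.lowerCentralSeries F L' L' 1).toSubmodule = 0 := by
      rw [le_bot_iff.mp hle]; simp
    omega
  -- ker α ⊆ ker β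
  have hαβ : ∀ z : L', α z = 0 → β z = 0 := by
    by_contra hcon
    push_neg at hcon
    obtain ⟨z₁, hz₁α, hz₁β⟩ := hcon
    have hQalt : ∀ x : L', β x ≠ 0 → α x = 0 → Q x = 0 := by
      intro x hb ha
      have h1 := halt x
      rw [ha, zero_smul] at h1
      exact (smul_eq_zero.mp h1.symm).resolve_left hb
    have hQker : ∀ z : L', α z = 0 → Q z = 0 := by
      intro z hz
      by_cases hβz : β z = 0
      · have h1 : Q (z + z₁) = 0 := by
          refine hQalt _ ?_ ?_
          · rw [map_add, hβz, zero_add]; exact hz₁β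
          · rw [map_add, hz, hz₁α, add_zero]
        have h2 : Q z₁ = 0 := hQalt _ hz₁β hz₁α
        rw [map_add, h2, add_zero] at h1
        exact h1
      · exact hQalt z hβz hz
    have hQ0 : ∀ x : L', Q x = 0 := by
      intro x
      have h1 : Q (x - α x • x₀) = 0 := hQker _ (hdec x)
      rw [map_sub, map_smul, hQx₀, smul_zero, sub_zero] at h1
      exact h1
    have hPalt : ∀ x : L', α x ≠ 0 → P x = 0 := by
      intro x hx
      have h1 := halt x
      rw [hQ0, smul_zero] at h1
      exact (smul_eq_zero.mp h1).resolve_left hx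
    have hPx₀' : P x₀ = 0 := hPalt x₀ (by rw [hαx₀]; exact one_ne_zero)
    have hP0 : ∀ x : L', P x = 0 := by
      intro x
      have h1 : P (x - α x • x₀ + x₀) = 0 := by
        refine hPalt _ ?_
        rw [map_add, hdec, zero_add, hαx₀]
        exact one_ne_zero
      rw [map_add, hPx₀', add_zero, map_sub, map_smul, hPx₀', smul_zero, sub_zero] at h1
      exact h1
    exact hnotab fun x y => by rw [hbr, hQ0, hP0, smul_zero, smul_zero, sub_zero]
  -- ker β ⊆ ker α
  have hβα : ∀ z : L', β z = 0 → α z = 0 := by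
    by_contra hcon
    push_neg at hcon
    obtain ⟨z₁, hz₁β, hz₁α⟩ := hcon
    have hPalt : ∀ x : L', α x ≠ 0 → β x = 0 → P x = 0 := by
      intro x ha hb
      have h1 := halt x
      rw [hb, zero_smul] at h1
      exact (smul_eq_zero.mp h1).resolve_left ha
    have hPker : ∀ z : L', β z = 0 → P z = 0 := by
      intro z hz
      by_cases hαz : α z = 0
      · have h1 : P (z + z₁) = 0 := by
          refine hPalt _ ?_ ?_
          · rw [map_add, hαz, zero_add]; exact hz₁α
          · rw [map_add, hz, hz₁β, add_zero]
        have h2 : P z₁ = 0 := hPalt _ hz₁α hz₁β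
        rw [map_add, h2, add_zero] at h1
        exact h1
      · exact hPalt z hαz hz
    have hdecβ : ∀ x : L', β (x - β x • y₀) = 0 := by
      intro x
      simp [map_sub, map_smul, hβy₀]
    have hP0 : ∀ x : L', P x = 0 := by
      intro x
      have h1 : P (x - β x • y₀) = 0 := hPker _ (hdecβ x)
      rw [map_sub, map_smul, hPy₀, smul_zero, sub_zero] at h1
      exact h1
    have hQalt : ∀ x : L', β x ≠ 0 → Q x = 0 := by
      intro x hx
      have h1 := halt x
      rw [hP0, smul_zero] at h1
      exact (smul_eq_zero.mp h1.symm).resolve_left hx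
    have hQy₀ : Q y₀ = 0 := hQalt y₀ (by rw [hβy₀]; exact one_ne_zero)
    have hQ0 : ∀ x : L', Q x = 0 := by
      intro x
      have h1 : Q (x - β x • y₀ + y₀) = 0 := by
        refine hQalt _ ?_
        rw [map_add, hdecβ, zero_add, hβy₀]
        exact one_ne_zero
      rw [map_add, hQy₀, add_zero, map_sub, map_smul, hQy₀, smul_zero, sub_zero] at h1
      exact h1
    exact hnotab fun x y => by rw [hbr, hQ0, hP0, smul_zero, smul_zero, sub_zero]
  -- β = c * α
  set c : F := β x₀ with hcdef
  have hcne : c ≠ 0 := by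
    intro hc0
    have := hβα x₀ hc0
    rw [hαx₀] at this
    exact one_ne_zero this
  have hβc : ∀ x : L', β x = c * α x := by
    intro x
    have h1 : β (x - α x • x₀) = 0 := hαβ _ (hdec x)
    rw [map_sub, map_smul] at h1
    have h2 : β x = α x • β x₀ := by
      have := sub_eq_zero.mp h1
      simpa using this
    rw [h2, ← hcdef]
    simp [mul_comm]
  have hPx₀ : P x₀ = 0 := by
    have h1 := halt x₀
    rw [hαx₀, hQx₀, one_smul, smul_zero] at h1
    exact h1
  -- P = c • Q
  have hPQ : ∀ x : L', P x = c • Q x := by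
    have key : ∀ x : L', α x ≠ 0 → P x = c • Q x := by
      intro x hx
      have h1 := halt x
      rw [hβc, mul_comm, mul_smul] at h1
      exact smul_right_injective L' hx h1
    have key0 : ∀ z : L', α z = 0 → P z = c • Q z := by
      intro z hz
      have h1 := key (z + x₀) (by rw [map_add, hz, zero_add, hαx₀]; exact one_ne_zero)
      rw [map_add, map_add, hPx₀, hQx₀, add_zero, add_zero] at h1
      exact h1
    intro x
    have h1 := key0 (x - α x • x₀) (hdec x)
    simp only [map_sub, map_smul, hPx₀, hQx₀, smul_zero, sub_zero] at h1
    exact h1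
  have hbr' : ∀ x y : L', ⁅x, y⁆ = α x • P y - α y • P x := by
    intro x y
    rw [hbr, hβc, hPQ x, mul_comm, mul_smul]
  have hbrP : ∀ x y : L', ⁅x, y⁆ = P (α x • y - α y • x) := by
    intro x y
    rw [hbr', map_sub, map_smul, map_smul]
  have hαbrket : ∀ x y : L', α (α x • y - α y • x) = 0 := by
    intro x y
    simp only [map_sub, map_smul, smul_eq_mul]
    ring
  have hx₀br : ∀ z : L', ⁅x₀, z⁆ = P z := by
    intro z
    rw [hbr', hαx₀, hPx₀, one_smul, smul_zero, sub_zero]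
  have hC2range : (LieModule.lowerCentralSeries F L' L' 1).toSubmodule = LinearMap.range P := by
    apply le_antisymm
    · have := lcs_le_submodule (F := F) 0 (LinearMap.range P)
        (fun x z _ => by rw [hbrP]; exact LinearMap.mem_range_self _ _)
      simpa using this
    · rintro z ⟨w, rfl⟩
      rw [← hx₀br]
      exact lie_mem_lcs_succ 0 x₀ w trivial
  -- Jacobi consequence
  have hJ : ∀ y z : L', α y = 0 → α z = 0 → α (P y) • P z = α (P z) • P y := by
    intro y z hy hz
    have hyz : ⁅y, z⁆ = 0 := by rw [hbr', hy, hz, zero_smul, zero_smul, sub_zero]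
    have hzx : ⁅z, x₀⁆ = -P z := by rw [← lie_skew, hx₀br]
    have hJac := lie_jacobi x₀ y z
    rw [hyz, lie_zero, hzx, hx₀br y, lie_neg, zero_add] at hJac
    rw [hbr' y (P z), hbr' z (P y), hy, hz, zero_smul, zero_smul, zero_sub, zero_sub,
      neg_neg] at hJac
    exact (sub_eq_zero.mp (by rw [sub_eq_add_neg]; exact hJac)).symm
  -- α ∘ P = 0
  have hφ : ∀ y : L', α y = 0 → α (P y) = 0 := by
    by_contra hcon
    push_neg at hcon
    obtain ⟨y₁, hy₁, hφy₁⟩ := hcon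
    have hle : (LieModule.lowerCentralSeries F L' L' 1).toSubmodule ≤
        Submodule.span F {P y₁} := by
      have key : ∀ x z : L', ⁅x, z⁆ ∈ Submodule.span F {P y₁} := by
        intro x z
        rw [hbrP]
        have hJ1 := hJ (α x • z - α z • x) y₁ (hαbrket x z) hy₁
        have h2 : P (α x • z - α z • x) =
            ((α (P y₁))⁻¹ * α (P (α x • z - α z • x))) • P y₁ := by
          rw [mul_smul, hJ1, smul_smul, inv_mul_cancel₀ hφy₁, one_smul]
        rw [h2]
        exact Submodule.smul_mem _ _ (Submodule.mem_span_singleton_self _)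
      have := lcs_le_submodule (F := F) 0 (Submodule.span F {P y₁})
        (fun x z _ => key x z)
      simpa using this
    have h1 : m - 1 ≤ Module.finrank F (Submodule.span F {P y₁}) := by
      rw [← hC2fr]
      exact Submodule.finrank_mono hle
    have h2 : Module.finrank F (Submodule.span F {P y₁}) ≤ 1 := by
      by_cases hz : P y₁ = 0
      · rw [hz, Submodule.span_zero_singleton]
        simp
      · rw [finrank_span_singleton hz]
    omega
  have hαP : ∀ x : L', α (P x) = 0 := by
    intro x
    have h1 := hφ (x - α x • x₀) (hdec x)
    rw [map_sub, map_smul, hPx₀, smul_zero, sub_zero] at h1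
    exact h1
  -- lower central series = range of powers of P
  have hlcsP : ∀ k : ℕ, (LieModule.lowerCentralSeries F L' L' (k + 1)).toSubmodule =
      LinearMap.range (P ^ (k + 1)) := by
    intro k
    induction k with
    | zero => simpa [pow_one] using hC2range
    | succ k ih =>
      apply le_antisymm
      · refine lcs_le_submodule (k + 1) _ (fun x z hz => ?_)
        have hz' : z ∈ LinearMap.range (P ^ (k + 1)) := by rw [← ih]; exact hz
        obtain ⟨w, rfl⟩ := hz'
        have hα1 : α ((P ^ (k + 1)) w) = 0 := by
          rw [pow_succ', Module.End.mul_apply]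
          exact hαP _
        rw [hbr', hα1, zero_smul, sub_zero]
        have h2 : (P ^ (k + 1 + 1)) w = P ((P ^ (k + 1)) w) := by
          rw [pow_succ', Module.End.mul_apply]
        rw [← h2]
        exact Submodule.smul_mem _ _ (LinearMap.mem_range_self _ _)
      · rintro z ⟨w, rfl⟩
        have h1 : (P ^ (k + 1 + 1)) w = ⁅x₀, (P ^ (k + 1)) w⁆ := by
          rw [hx₀br, pow_succ', Module.End.mul_apply]
        rw [h1]
        refine lie_mem_lcs_succ (k + 1) x₀ _ ?_
        have : (P ^ (k + 1)) w ∈ (LieModule.lowerCentralSeries F L' L' (k + 1)).toSubmodule := by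
          rw [ih]
          exact LinearMap.mem_range_self _ _
        exact this
  -- ranks of powers
  have hpowrank : ∀ j : ℕ, j + 1 ≤ m → Module.finrank F (LinearMap.range (P ^ (j + 1)))
      = m - (j + 1) := by
    intro j hj
    have h1 := hfil.2 (j + 2) (by omega) (by omega)
    rw [show j + 2 - 1 = j + 1 from by omega] at h1
    rw [← hlcsP j, ← finrank_lcs_coe, h1]
    omega
  have hPm : P ^ m = 0 := by
    have h1 := hpowrank (m - 1) (by omega)
    rw [show m - 1 + 1 = m from by omega] at h1
    simp only [Nat.sub_self] at h1
    have h2 : LinearMap.range (P ^ m) = ⊥ := Submodule.finrank_eq_zero.mp h1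
    exact LinearMap.range_eq_bot.mp h2
  have hexu : ∃ u₀ : L', (P ^ (m - 1)) u₀ ≠ 0 := by
    by_contra hno
    push_neg at hno
    have h1 : LinearMap.range (P ^ (m - 1)) = ⊥ :=
      LinearMap.range_eq_bot.mpr (LinearMap.ext hno)
    have h2 := hpowrank (m - 2) (by omega)
    rw [show m - 2 + 1 = m - 1 from by omega, h1] at h2
    simp only [finrank_bot] at h2
    omega
  obtain ⟨u₀, hu₀⟩ := hexu
  have hPx₀pow : ∀ k : ℕ, 1 ≤ k → (P ^ k) x₀ = 0 := by
    intro k hk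
    obtain ⟨j, rfl⟩ : ∃ j, k = j + 1 := ⟨k - 1, by omega⟩
    rw [pow_succ, Module.End.mul_apply, hPx₀, map_zero]
  set u : L' := u₀ - α u₀ • x₀ with hudef
  have hchain_ne : (P ^ (m - 1)) u ≠ 0 := by
    rw [hudef, map_sub, map_smul, hPx₀pow (m - 1) (by omega), smul_zero, sub_zero]
    exact hu₀
  have hαu : α u = 0 := hdec u₀
  -- linear independence of the Krylov chain
  have hli : LinearIndependent F (fun j : Fin m => (P ^ (j : ℕ)) u) := by
    rw [Fintype.linearIndependent_iff]
    intro gc hgc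
    suffices hS : ∀ N : ℕ, ∀ j : Fin m, (j : ℕ) = N → gc j = 0 by
      exact fun j => hS (j : ℕ) j rfl
    intro N
    induction N using Nat.strong_induction_on with
    | _ N ih =>
      intro j hj
      have happ := congrArg (⇑(P ^ (m - 1 - N))) hgc
      rw [map_sum, map_zero] at happ
      have hterm : ∀ i : Fin m, (P ^ (m - 1 - N)) (gc i • (P ^ (i : ℕ)) u)
          = gc i • (P ^ (m - 1 - N + (i : ℕ))) u := by
        intro i
        rw [map_smul, ← Module.End.mul_apply, ← pow_add]
      rw [Finset.sum_congr rfl (fun i _ => hterm i)] at happ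
      have hzero : ∀ i : Fin m, i ∈ Finset.univ → i ≠ j →
          gc i • (P ^ (m - 1 - N + (i : ℕ))) u = 0 := by
        intro i _ hi
        have hine : (i : ℕ) ≠ N := by
          intro hh
          exact hi (Fin.ext (by omega))
        rcases lt_or_gt_of_ne hine with hlt | hgt
        · rw [ih (i : ℕ) hlt i rfl, zero_smul]
        · have hbig : (P ^ (m - 1 - N + (i : ℕ))) u = 0 := by
            have hNlt : N < m := by omega
            obtain ⟨d, hd⟩ : ∃ d, m - 1 - N + (i : ℕ) = d + m :=
              ⟨m - 1 - N + (i : ℕ) - m, by omega⟩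
            rw [hd, pow_add, Module.End.mul_apply, hPm]
            simp
          rw [hbig, smul_zero]
      rw [Finset.sum_eq_single_of_mem j (Finset.mem_univ j) (hzero)] at happ
      rw [hj, show m - 1 - N + N = m - 1 from by omega] at happ
      exact (smul_eq_zero.mp happ).resolve_right hchain_ne
  -- reversed chain
  set v : Fin m → L' := fun j => (P ^ (m - 1 - (j : ℕ))) u with hvdef
  have hvrev : v = (fun j : Fin m => (P ^ (j : ℕ)) u) ∘ Fin.rev := by
    funext j
    show (P ^ (m - 1 - (j : ℕ))) u = (P ^ ((Fin.rev j : Fin m) : ℕ)) u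
    rw [Fin.val_rev, show m - ((j : ℕ) + 1) = m - 1 - (j : ℕ) from by omega]
  have hliv : LinearIndependent F v := by
    rw [hvrev]
    exact hli.comp Fin.rev Fin.rev_injective
  have hαv : ∀ j : Fin m, α (v j) = 0 := by
    intro j
    by_cases hh : m - 1 - (j : ℕ) = 0
    · simp only [hvdef, hh, pow_zero, Module.End.one_apply]
      exact hαu
    · obtain ⟨d, hd⟩ : ∃ d, m - 1 - (j : ℕ) = d + 1 := ⟨m - 1 - (j : ℕ) - 1, by omega⟩
      simp only [hvdef, hd, pow_succ', Module.End.mul_apply]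
      exact hαP _
  have hcons : LinearIndependent F (Fin.cons x₀ v : Fin (m + 1) → L') := by
    rw [linearIndependent_fin_cons]
    refine ⟨hliv, fun hmem => ?_⟩
    have hsub : Submodule.span F (Set.range v) ≤ LinearMap.ker α := by
      rw [Submodule.span_le]
      rintro w ⟨j, rfl⟩
      exact hαv j
    have := hsub hmem
    rw [LinearMap.mem_ker, hαx₀] at this
    exact one_ne_zero this
  -- the new basis
  let Bb := basisOfLinearIndependentOfCardEqFinrank hcons (by simp [hfil.1])
  have hBb : ⇑Bb = Fin.cons x₀ v := coe_basisOfLinearIndependentOfCardEqFinrank _ _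
  have hconsV : ∀ (i : Fin (m + 1)) (h1 : 1 ≤ (i : ℕ)),
      (Fin.cons x₀ v : Fin (m + 1) → L') i = v ⟨(i : ℕ) - 1, by omega⟩ := by
    intro i h1
    have hieq : i = Fin.succ ⟨(i : ℕ) - 1, by omega⟩ := by
      apply Fin.ext
      simp only [Fin.val_succ]
      omega
    conv_lhs => rw [hieq]
    rw [Fin.cons_succ]
  have hPv : ∀ j : Fin m, 1 ≤ (j : ℕ) → P (v j) = v ⟨(j : ℕ) - 1, by omega⟩ := by
    intro j hj
    show P ((P ^ (m - 1 - (j : ℕ))) u) = (P ^ (m - 1 - ((j : ℕ) - 1))) u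
    rw [← Module.End.mul_apply, ← pow_succ',
      show m - 1 - (j : ℕ) + 1 = m - 1 - ((j : ℕ) - 1) from by omega]
  have hPv0 : ∀ j : Fin m, (j : ℕ) = 0 → P (v j) = 0 := by
    intro j hj
    show P ((P ^ (m - 1 - (j : ℕ))) u) = 0
    rw [hj, Nat.sub_zero, ← Module.End.mul_apply, ← pow_succ',
      show m - 1 + 1 = m from by omega, hPm]
    simp
  have hαB : ∀ i : Fin (m + 1), α (Bb i) = if (i : ℕ) = 0 then 1 else 0 := by
    intro i
    rw [hBb]
    by_cases hh : (i : ℕ) = 0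
    · have hi : i = 0 := Fin.ext hh
      subst hi
      simp [Fin.cons_zero, hαx₀]
    · rw [hconsV i (by omega), if_neg hh]
      exact hαv _
  have hPB : ∀ i : Fin (m + 1), P (Bb i) =
      if h2 : 2 ≤ (i : ℕ) then Bb ⟨(i : ℕ) - 1, by omega⟩ else 0 := by
    intro i
    rw [hBb]
    by_cases hh : (i : ℕ) = 0
    · have hi : i = 0 := Fin.ext hh
      subst hi
      rw [dif_neg (by simp)]
      simp [Fin.cons_zero, hPx₀]
    · rw [hconsV i (by omega)]
      by_cases hh2 : 2 ≤ (i : ℕ)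
      · rw [dif_pos hh2, hconsV ⟨(i : ℕ) - 1, by omega⟩ (show 1 ≤ (i : ℕ) - 1 by omega),
          hPv ⟨(i : ℕ) - 1, by omega⟩ (show 1 ≤ (i : ℕ) - 1 by omega)]
      · rw [dif_neg hh2, hPv0 _ (show (i : ℕ) - 1 = 0 by omega)]
  -- build the equivalence
  let T := Bb.equiv e (Equiv.refl _)
  have hTB : ∀ i, T (Bb i) = e i := fun i => by simp [T, Module.Basis.equiv_apply]
  refine nonempty_lieEquiv T ?_
  intro x y
  refine map_lie_of_basis Bb T.toLinearMap ?_ x y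
  intro i j
  simp only [LinearEquiv.coe_coe]
  rw [hTB, hTB, hMf (e i) (e j), hπe, hπe, hDdef, modelD_apply, modelD_apply,
    hbr' (Bb i) (Bb j), hαB, hαB, hPB, hPB]
  split_ifs <;>
    simp only [map_sub, map_smul, map_zero, one_smul, zero_smul, sub_zero, zero_sub,
      smul_zero, neg_zero, sub_self, neg_neg, map_neg, hTB]

end Big

/-- Any `n`-dimensional filiform Lie algebra isotopic to the `n`-dimensional model filiform
Lie algebra is isomorphic to it. -/
theorem isotopic_to_model_implies_isomorphic (n : ℕ)
    (M : Type*) [LieRing M] [LieAlgebra K M] (e : Module.Basis (Fin n) K M)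
    (hM : IsModelFiliform K M n e)
    (L' : Type*) [LieRing L'] [LieAlgebra K L']
    (hfil : IsFiliform K L' n)
    (hisot : LieIsotopic K M L') :
    Nonempty (L' ≃ₗ⁅K⁆ M) := by
  rcases Nat.lt_or_ge n 3 with hn | hn
  · exact case_small (by omega) e hM hisot
  rcases Nat.lt_or_ge n 4 with hn4 | hn4
  · have h3 : n = 3 := by omega
    subst h3
    exact case_three e hM hfil
  · obtain ⟨m, rfl⟩ : ∃ m, n = m + 1 := ⟨n - 1, by omega⟩
    exact case_big (by omega) e hM hfil hisot
end
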